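/- The automorphism group of the Petersen graph (the Kneser graph on 2-element subsets of a 5-element set, with adjacency given by disjointness) is isomorphic to the symmetric group S₅, the isomorphism being induced by the natural action of S₅ on 2-element subsets. -/

import Mathlib

/-- The vertex set of the Petersen graph: 2-element subsets of a 5-element set. -/
abbrev PVert : Type := {S : Finset (Fin 5) // S.card = 2}

/-- The Petersen graph: vertices are the 2-element subsets of a 5-element set,
adjacent iff disjoint. -/
def petersen : SimpleGraph PVert where
  Adj S T := S ≠ T ∧ Disjoint S.1 T.1
  symm := ⟨fun S T h => ⟨h.1.symm, h.2.symm⟩⟩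
  loopless := ⟨fun S h => h.1 rfl⟩

namespace PetersenAux

set_option synthInstance.maxHeartbeats 1000000 in
set_option synthInstance.maxSize 2000 in
set_option maxHeartbeats 4000000 in
theorem commonUnique : ∀ P Q R T : PVert,
    (P ≠ Q ∧ P ≠ R ∧ P ≠ T ∧ Q ≠ R ∧ Q ≠ T ∧ R ≠ T) →
    (¬Disjoint P.1 Q.1 ∧ ¬Disjoint P.1 R.1 ∧ ¬Disjoint P.1 T.1 ∧ ¬Disjoint Q.1 R.1 ∧
     ¬Disjoint Q.1 T.1 ∧ ¬Disjoint R.1 T.1) →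
    ∃ x, (x ∈ P.1 ∧ x ∈ Q.1 ∧ x ∈ R.1 ∧ x ∈ T.1) ∧
      ∀ y, (y ∈ P.1 ∧ y ∈ Q.1 ∧ y ∈ R.1 ∧ y ∈ T.1) → y = x := by decide

theorem shift_ne : ∀ a : Fin 5, a ≠ a+1 ∧ a ≠ a+2 ∧ a ≠ a+3 ∧ a ≠ a+4 ∧
    a+1 ≠ a+2 ∧ a+1 ≠ a+3 ∧ a+1 ≠ a+4 ∧ a+2 ≠ a+3 ∧ a+2 ≠ a+4 ∧ a+3 ≠ a+4 := by decide

theorem cover : ∀ a b : Fin 5, a ≠ b → b = a+1 ∨ b = a+2 ∨ b = a+3 ∨ b = a+4 := by decide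

theorem pairs_ne : ∀ a b c : Fin 5, b ≠ c → ({a,b} : Finset (Fin 5)) ≠ {a,c} := by decide

theorem sep : ∀ a b : Fin 5, a ≠ b →
    ∃ c d, Disjoint ({a,c} : Finset (Fin 5)) {b,d} ∧ a ≠ c ∧ b ≠ d := by decide

/-- make a vertex from two distinct elements -/
def mk2 (a b : Fin 5) (h : a ≠ b) : PVert :=
  ⟨{a, b}, by rw [Finset.card_insert_of_notMem (by simpa using h), Finset.card_singleton]⟩

theorem mk2_comm (a b : Fin 5) (h : a ≠ b) : mk2 a b h = mk2 b a h.symm :=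
  Subtype.ext (Finset.pair_comm a b)

theorem mk2_ne (a b c : Fin 5) (h1 : a ≠ b) (h2 : a ≠ c) (h3 : b ≠ c) :
    mk2 a b h1 ≠ mk2 a c h2 := fun e => pairs_ne a b c h3 (congrArg Subtype.val e)

theorem mk2_nondisj (a b c : Fin 5) (h1 : a ≠ b) (h2 : a ≠ c) :
    ¬Disjoint (mk2 a b h1).1 (mk2 a c h2).1 :=
  Finset.not_disjoint_iff.mpr ⟨a, Finset.mem_insert_self _ _, Finset.mem_insert_self _ _⟩

/-- The σ-action as an equivalence of vertices. -/
def permEquiv (σ : Equiv.Perm (Fin 5)) : PVert ≃ PVert where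
  toFun S := ⟨S.1.image σ, by rw [Finset.card_image_of_injective _ σ.injective, S.2]⟩
  invFun S := ⟨S.1.image σ.symm, by rw [Finset.card_image_of_injective _ σ.symm.injective, S.2]⟩
  left_inv S := by
    apply Subtype.ext
    simp [Finset.image_image]
  right_inv S := by
    apply Subtype.ext
    simp [Finset.image_image]

/-- The σ-action as a graph automorphism. -/
def phi (σ : Equiv.Perm (Fin 5)) : petersen ≃g petersen where
  toEquiv := permEquiv σ
  map_rel_iff' := by
    intro S T
    show (permEquiv σ S ≠ permEquiv σ T ∧ Disjoint (S.1.image σ) (T.1.image σ)) ↔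
      (S ≠ T ∧ Disjoint S.1 T.1)
    rw [(permEquiv σ).injective.ne_iff, Finset.disjoint_image σ.injective]

end PetersenAux

open PetersenAux in
theorem petersen_aut_eq_S5 :
    ∃ φ : Equiv.Perm (Fin 5) → (petersen ≃g petersen),
      Function.Bijective φ ∧
      ∀ (σ : Equiv.Perm (Fin 5)) (S : PVert), ((φ σ) S).1 = S.1.image σ := by
  refine ⟨phi, ⟨?_, ?_⟩, fun σ S => rfl⟩
  · -- injectivity
    intro σ τ h
    have h' : ∀ S : PVert, S.1.image σ = S.1.image τ := by
      intro S
      have := congrArg (fun (g : petersen ≃g petersen) => (g S).1) h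
      simpa [phi, permEquiv] using this
    apply Equiv.ext
    intro a
    obtain ⟨hab, hac, -, -, hbc, -⟩ := shift_ne a
    have h1 := h' (mk2 a (a+1) hab)
    have h2 := h' (mk2 a (a+2) hac)
    simp only [mk2, Finset.image_insert, Finset.image_singleton] at h1 h2
    have m1 : σ a ∈ ({τ a, τ (a+1)} : Finset (Fin 5)) := by
      rw [← h1]; exact Finset.mem_insert_self _ _
    have m2 : σ a ∈ ({τ a, τ (a+2)} : Finset (Fin 5)) := by
      rw [← h2]; exact Finset.mem_insert_self _ _
    simp only [Finset.mem_insert, Finset.mem_singleton] at m1 m2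
    rcases m1 with e1 | e1
    · exact e1
    rcases m2 with e2 | e2
    · exact e2
    · exact absurd (τ.injective (e1.symm.trans e2)) (by
        intro e
        exact hbc (by simpa using e))
  · -- surjectivity
    intro f
    -- f preserves "distinct and non-disjoint"
    have fnd : ∀ S T : PVert, S ≠ T → ¬Disjoint S.1 T.1 →
        f S ≠ f T ∧ ¬Disjoint (f S).1 (f T).1 := by
      intro S T hne hnd
      refine ⟨fun e => hne (f.injective e), fun hd => ?_⟩
      exact hnd ((f.map_rel_iff.mp ⟨fun e => hne (f.injective e), hd⟩).2)
    -- construct σ pointwise: common element of the four images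
    have exu : ∀ a : Fin 5, ∃ x,
        (∀ b (hb : a ≠ b), x ∈ (f (mk2 a b hb)).1) ∧
        ∀ y, (y ∈ (f (mk2 a (a+1) (shift_ne a).1)).1 ∧
              y ∈ (f (mk2 a (a+2) (shift_ne a).2.1)).1 ∧
              y ∈ (f (mk2 a (a+3) (shift_ne a).2.2.1)).1 ∧
              y ∈ (f (mk2 a (a+4) (shift_ne a).2.2.2.1)).1) → y = x := by
      intro a
      obtain ⟨h1, h2, h3, h4, h12, h13, h14, h23, h24, h34⟩ := shift_ne a
      obtain ⟨x, ⟨x1, x2, x3, x4⟩, hu⟩ := commonUnique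
        (f (mk2 a (a+1) h1)) (f (mk2 a (a+2) h2)) (f (mk2 a (a+3) h3)) (f (mk2 a (a+4) h4))
        ⟨(fnd _ _ (mk2_ne a _ _ h1 h2 h12) (mk2_nondisj a _ _ h1 h2)).1,
         (fnd _ _ (mk2_ne a _ _ h1 h3 h13) (mk2_nondisj a _ _ h1 h3)).1,
         (fnd _ _ (mk2_ne a _ _ h1 h4 h14) (mk2_nondisj a _ _ h1 h4)).1,
         (fnd _ _ (mk2_ne a _ _ h2 h3 h23) (mk2_nondisj a _ _ h2 h3)).1,
         (fnd _ _ (mk2_ne a _ _ h2 h4 h24) (mk2_nondisj a _ _ h2 h4)).1,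
         (fnd _ _ (mk2_ne a _ _ h3 h4 h34) (mk2_nondisj a _ _ h3 h4)).1⟩
        ⟨(fnd _ _ (mk2_ne a _ _ h1 h2 h12) (mk2_nondisj a _ _ h1 h2)).2,
         (fnd _ _ (mk2_ne a _ _ h1 h3 h13) (mk2_nondisj a _ _ h1 h3)).2,
         (fnd _ _ (mk2_ne a _ _ h1 h4 h14) (mk2_nondisj a _ _ h1 h4)).2,
         (fnd _ _ (mk2_ne a _ _ h2 h3 h23) (mk2_nondisj a _ _ h2 h3)).2,
         (fnd _ _ (mk2_ne a _ _ h2 h4 h24) (mk2_nondisj a _ _ h2 h4)).2,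
         (fnd _ _ (mk2_ne a _ _ h3 h4 h34) (mk2_nondisj a _ _ h3 h4)).2⟩
      refine ⟨x, ?_, hu⟩
      intro b hb
      rcases cover a b hb with rfl | rfl | rfl | rfl
      · exact x1
      · exact x2
      · exact x3
      · exact x4
    choose s hs _ using exu
    -- injectivity of s
    have hsne : ∀ a b : Fin 5, a ≠ b → s a ≠ s b := by
      intro a b hab
      obtain ⟨c, d, hdisj, hac, hbd⟩ := sep a b hab
      have hS : mk2 a c hac ≠ mk2 b d hbd := by
        intro e
        have : a ∈ ({b, d} : Finset (Fin 5)) := by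
          have := congrArg Subtype.val e
          simp only [mk2] at this
          rw [← this]; exact Finset.mem_insert_self _ _
        exact (Finset.disjoint_left.mp hdisj (Finset.mem_insert_self a {c})) this
      have hadj : petersen.Adj (f (mk2 a c hac)) (f (mk2 b d hbd)) :=
        f.map_rel_iff.mpr ⟨hS, hdisj⟩
      intro e
      exact (Finset.disjoint_left.mp hadj.2 (hs a c hac)) (e ▸ hs b d hbd)
    -- key: image of a pair
    have key : ∀ a b (h : a ≠ b), (f (mk2 a b h)).1 = {s a, s b} := by
      intro a b h
      have ma : s a ∈ (f (mk2 a b h)).1 := hs a b h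
      have mb : s b ∈ (f (mk2 a b h)).1 := by
        rw [mk2_comm a b h]; exact hs b a h.symm
      have hsub : ({s a, s b} : Finset (Fin 5)) ⊆ (f (mk2 a b h)).1 := by
        intro x hx
        rcases Finset.mem_insert.mp hx with rfl | hx
        · exact ma
        · rw [Finset.mem_singleton.mp hx]; exact mb
      have hcard : ({s a, s b} : Finset (Fin 5)).card = 2 := by
        rw [Finset.card_insert_of_notMem (by simpa using hsne a b h), Finset.card_singleton]
      exact (Finset.eq_of_subset_of_card_le hsub (by rw [hcard, (f (mk2 a b h)).2])).symm
    -- build the permutation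
    have hbij : Function.Bijective s := Finite.injective_iff_bijective.mp
      (fun a b e => by by_contra hne; exact hsne a b hne e)
    refine ⟨Equiv.ofBijective s hbij, ?_⟩
    have hco : ∀ x, (Equiv.ofBijective s hbij) x = s x := fun x => rfl
    apply RelIso.ext
    intro S
    apply Subtype.ext
    obtain ⟨a, b, hab, hS⟩ := Finset.card_eq_two.mp S.2
    have hSm : S = mk2 a b hab := Subtype.ext hS
    show S.1.image (Equiv.ofBijective s hbij) = (f S).1
    rw [hSm]
    show ({a, b} : Finset (Fin 5)).image s = (f (mk2 a b hab)).1
    rw [key a b hab, Finset.image_insert, Finset.image_singleton]
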